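/- The map δ_a (a ∈ ℝⁿ, ‖a‖ < 1) maps the open unit ball into itself: if ‖x‖ < 1 then ‖δ_a(x)‖ < 1. -/

import Mathlib

open scoped RealInnerProductSpace

noncomputable section

def delta {n : ℕ} (a x : EuclideanSpace ℝ (Fin n)) : EuclideanSpace ℝ (Fin n) :=
  (‖x‖ ^ 2 * ‖a‖ ^ 2 - 2 * ⟪x, a⟫ + 1)⁻¹ •
    ((‖a‖ ^ 2 - 1) • x + (1 + ‖x‖ ^ 2) • a - (2 * ⟪x, a⟫) • a)

theorem stmt13 (n : ℕ) (a : EuclideanSpace ℝ (Fin n)) (ha : ‖a‖ < 1)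
    (x : EuclideanSpace ℝ (Fin n)) (hx : ‖x‖ < 1) : ‖delta a x‖ < 1 := by
  have hxa : ‖x - a‖ ^ 2 = ‖x‖ ^ 2 - 2 * ⟪x, a⟫ + ‖a‖ ^ 2 := by
    rw [norm_sub_sq_real]
  have h1 : (0:ℝ) < (1 - ‖x‖ ^ 2) * (1 - ‖a‖ ^ 2) := by
    apply mul_pos <;> nlinarith [norm_nonneg x, norm_nonneg a]
  have hDpos : 0 < ‖x‖ ^ 2 * ‖a‖ ^ 2 - 2 * ⟪x, a⟫ + 1 := by
    nlinarith [sq_nonneg ‖x - a‖]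
  set D := ‖x‖ ^ 2 * ‖a‖ ^ 2 - 2 * ⟪x, a⟫ + 1 with hD
  have hNe : (‖a‖ ^ 2 - 1) • x + (1 + ‖x‖ ^ 2) • a - (2 * ⟪x, a⟫) • a
      = (‖a‖ ^ 2 - 1) • x + (1 + ‖x‖ ^ 2 - 2 * ⟪x, a⟫) • a := by
    module
  have hN2 : ‖(‖a‖ ^ 2 - 1) • x + (1 + ‖x‖ ^ 2) • a - (2 * ⟪x, a⟫) • a‖ ^ 2
      = D * ‖x - a‖ ^ 2 := by
    rw [hNe, norm_add_sq_real, norm_smul, norm_smul, real_inner_smul_left,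
      real_inner_smul_right]
    simp only [Real.norm_eq_abs, mul_pow, sq_abs]
    nlinarith [hxa]
  have hdelta : ‖delta a x‖ ^ 2 = ‖x - a‖ ^ 2 / D := by
    rw [delta, norm_smul, mul_pow, hN2, Real.norm_eq_abs, sq_abs, ← hD]
    field_simp
  have hlt : ‖x - a‖ ^ 2 / D < 1 := by
    rw [div_lt_one hDpos]
    nlinarith
  have := hdelta ▸ hlt
  nlinarith [norm_nonneg (delta a x)]

end
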